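/- arXiv:2103.02366 — 3 statements merged into one kernel-verified Lean document; each statement's English description precedes it below -/
import Mathlib

section
/- If a mixed graph G admits a perfect numbering of its vertices, then it admits a perfect numbering in which every discrete vertex precedes every continuous vertex; that is, there is an enumeration v_1, …, v_m of V that is a perfect numbering and an index t such that {v_1, …, v_t} = Δ and {v_{t+1}, …, v_m} = Γ. -/
open Finset

/-- The set `B(v_j) = ({v_j} ∪ N(v_j)) ∩ {v_1, …, v_j}` associated with an
enumeration `v` of the vertices of a graph `G`. -/
def numBset {V : Type*} [Fintype V] [DecidableEq V] (G : SimpleGraph V)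
    [DecidableRel G.Adj] {m : ℕ} (v : Fin m → V) (j : Fin m) : Finset V :=
  (insert (v j) (G.neighborFinset (v j))) ∩ ((Finset.Iic j).image v)

/-- The separator `S_j = B(v_j) ∩ {v_1, …, v_{j-1}}`, i.e. the parents of `v_j`. -/
def numSset {V : Type*} [Fintype V] [DecidableEq V] (G : SimpleGraph V)
    [DecidableRel G.Adj] {m : ℕ} (v : Fin m → V) (j : Fin m) : Finset V :=
  numBset G v j ∩ ((Finset.Iio j).image v)

/-- An enumeration `v : Fin m → V` of the vertices of a mixed graph `G`
(with `Δ` the set of discrete vertices, its complement being the continuous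
vertices) is a perfect numbering if it is a bijection and for every `j > 1`:
(a) there is `i < j` with `S_j ⊆ B(v_i)`; (b) `S_j` is complete in `G`;
(c) `R_j = {v_j} ⊆ Γ` or `S_j ⊆ Δ`. -/
structure IsPerfectNumbering {V : Type*} [Fintype V] [DecidableEq V]
    (G : SimpleGraph V) [DecidableRel G.Adj] (Δ : Set V) {m : ℕ}
    (v : Fin m → V) : Prop where
  bijective : Function.Bijective v
  exists_prev : ∀ j : Fin m, 0 < (j : ℕ) →
    ∃ i : Fin m, i < j ∧ numSset G v j ⊆ numBset G v i
  sep_complete : ∀ j : Fin m, 0 < (j : ℕ) → ∀ u w : V,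
    u ∈ numSset G v j → w ∈ numSset G v j → u ≠ w → G.Adj u w
  mixed : ∀ j : Fin m, 0 < (j : ℕ) → v j ∉ Δ ∨ ↑(numSset G v j) ⊆ Δ

lemma numSset_eq {V : Type*} [Fintype V] [DecidableEq V] (G : SimpleGraph V)
    [DecidableRel G.Adj] {m : ℕ} {u : Fin m → V} (hu : Function.Injective u)
    (j : Fin m) :
    numSset G u j = G.neighborFinset (u j) ∩ (Finset.Iio j).image u := by
  ext z
  simp only [numSset, numBset, Finset.mem_inter, Finset.mem_insert, Finset.mem_image,
    Finset.mem_Iio, Finset.mem_Iic, SimpleGraph.mem_neighborFinset]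
  constructor
  · rintro ⟨⟨hz, -⟩, i, hi, rfl⟩
    refine ⟨?_, i, hi, rfl⟩
    rcases hz with h | h
    · exact absurd (hu h) (ne_of_lt hi)
    · exact h
  · rintro ⟨hz, i, hi, rfl⟩
    exact ⟨⟨Or.inr hz, i, le_of_lt hi, rfl⟩, i, hi, rfl⟩

lemma numBset_eq {V : Type*} [Fintype V] [DecidableEq V] (G : SimpleGraph V)
    [DecidableRel G.Adj] {m : ℕ} {u : Fin m → V} (hu : Function.Injective u)
    (j : Fin m) :
    numBset G u j = insert (u j) (numSset G u j) := by
  rw [numSset_eq G hu]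
  ext z
  simp only [numBset, Finset.mem_inter, Finset.mem_insert, Finset.mem_image,
    Finset.mem_Iio, Finset.mem_Iic, SimpleGraph.mem_neighborFinset]
  constructor
  · rintro ⟨hz, i, hi, rfl⟩
    rcases hz with h | h
    · exact Or.inl h
    · rcases lt_or_eq_of_le hi with hlt | rfl
      · exact Or.inr ⟨h, i, hlt, rfl⟩
      · exact Or.inl rfl
  · rintro (rfl | ⟨hz, i, hi, rfl⟩)
    · exact ⟨Or.inl rfl, j, le_refl j, rfl⟩
    · exact ⟨Or.inr hz, i, le_of_lt hi, rfl⟩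

lemma exists_prev_aux {V : Type*} [Fintype V] [DecidableEq V] (G : SimpleGraph V)
    [DecidableRel G.Adj] {m : ℕ} {u : Fin m → V} (hu : Function.Injective u)
    (j : Fin m) (hj : 0 < (j : ℕ))
    (hcomp : ∀ x y : V, x ∈ numSset G u j → y ∈ numSset G u j → x ≠ y → G.Adj x y) :
    ∃ i : Fin m, i < j ∧ numSset G u j ⊆ numBset G u i := by
  classical
  have hm : 0 < m := lt_of_le_of_lt (Nat.zero_le _) j.isLt
  set I : Finset (Fin m) := (Finset.Iio j).filter (fun i => u i ∈ numSset G u j) with hI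
  have hmemI : ∀ z ∈ numSset G u j, ∃ i, i ∈ I ∧ u i = z := by
    intro z hz
    have hz' := hz
    rw [numSset_eq G hu] at hz'
    obtain ⟨-, h2⟩ := Finset.mem_inter.mp hz'
    obtain ⟨i, hi, rfl⟩ := Finset.mem_image.mp h2
    exact ⟨i, Finset.mem_filter.mpr ⟨hi, hz⟩, rfl⟩
  by_cases hne : I.Nonempty
  · set i := I.max' hne with hidef
    have hiI : i ∈ I := I.max'_mem hne
    have hij : i < j := Finset.mem_Iio.mp (Finset.mem_filter.mp hiI).1
    have hiS : u i ∈ numSset G u j := (Finset.mem_filter.mp hiI).2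
    refine ⟨i, hij, ?_⟩
    intro z hz
    rw [numBset_eq G hu]
    obtain ⟨i₂, hi₂I, rfl⟩ := hmemI z hz
    by_cases he : i₂ = i
    · subst he; exact Finset.mem_insert_self _ _
    · have hlt : i₂ < i := lt_of_le_of_ne (I.le_max' i₂ hi₂I) he
      apply Finset.mem_insert_of_mem
      rw [numSset_eq G hu]
      refine Finset.mem_inter.mpr ⟨?_, Finset.mem_image.mpr ⟨i₂, Finset.mem_Iio.mpr hlt, rfl⟩⟩
      rw [SimpleGraph.mem_neighborFinset]
      exact hcomp (u i) (u i₂) hiS hz (fun h => he (hu h.symm))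
  · refine ⟨⟨0, hm⟩, by simpa [Fin.lt_def] using hj, ?_⟩
    intro z hz
    obtain ⟨i, hiI, -⟩ := hmemI z hz
    exact absurd ⟨i, hiI⟩ hne

/-- If a mixed graph admits a perfect numbering, then it admits a perfect
numbering in which the discrete vertices precede the continuous ones. -/
theorem exists_perfectNumbering_discrete_first
    {V : Type*} [Fintype V] [DecidableEq V] (G : SimpleGraph V)
    [DecidableRel G.Adj] (Δ : Set V) {m : ℕ} (v : Fin m → V)
    (hv : IsPerfectNumbering G Δ v) :
    ∃ w : Fin m → V, IsPerfectNumbering G Δ w ∧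
      ∃ t : ℕ, t ≤ m ∧ ∀ j : Fin m, w j ∈ Δ ↔ (j : ℕ) < t := by
  classical
  have hvinj : Function.Injective v := hv.bijective.injective
  set A : Finset (Fin m) := univ.filter (fun i => v i ∈ Δ) with hAdef
  set B : Finset (Fin m) := univ.filter (fun i => ¬ v i ∈ Δ) with hBdef
  set t := A.card with htdef
  have hABcard : A.card + B.card = m := by
    have := Finset.card_filter_add_card_filter_not
      (s := (univ : Finset (Fin m))) (p := fun i => v i ∈ Δ)
    simpa using this
  have htm : t ≤ m := by omega
  have hBcard : B.card = m - t := by omega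
  -- the stable reordering σ : discrete positions first, then continuous ones
  set σ : Fin m → Fin m := fun a =>
    if h : (a : ℕ) < t then A.orderEmbOfFin rfl ⟨(a : ℕ), h⟩
    else B.orderEmbOfFin hBcard ⟨(a : ℕ) - t,
      by have := a.isLt; omega⟩ with hσdef
  have hσA : ∀ a : Fin m, (h : (a : ℕ) < t) → σ a = A.orderEmbOfFin rfl ⟨(a : ℕ), h⟩ :=
    fun a h => dif_pos h
  have hσB : ∀ a : Fin m, (h : ¬ (a : ℕ) < t) →
      σ a = B.orderEmbOfFin hBcard ⟨(a : ℕ) - t, by have := a.isLt; omega⟩ :=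
    fun a h => dif_neg h
  have hPiff : ∀ a : Fin m, v (σ a) ∈ Δ ↔ (a : ℕ) < t := by
    intro a
    by_cases h : (a : ℕ) < t
    · rw [hσA a h]
      have hmem := A.orderEmbOfFin_mem rfl ⟨(a : ℕ), h⟩
      have hmem2 : v ((A.orderEmbOfFin rfl) ⟨(a : ℕ), h⟩) ∈ Δ :=
        (Finset.mem_filter.mp hmem).2
      exact ⟨fun _ => h, fun _ => hmem2⟩
    · rw [hσB a h]
      have hmem := B.orderEmbOfFin_mem hBcard ⟨(a : ℕ) - t, by have := a.isLt; omega⟩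
      have hmem2 : ¬ v ((B.orderEmbOfFin hBcard) ⟨(a : ℕ) - t, by have := a.isLt; omega⟩) ∈ Δ :=
        (Finset.mem_filter.mp hmem).2
      exact ⟨fun hh => absurd hh hmem2, fun hh => absurd hh h⟩
  -- the key function: sorting by it is the stable reorder
  set key : Fin m → ℕ := fun i => if v i ∈ Δ then (i : ℕ) else m + (i : ℕ) with hkeydef
  have hkeyA : ∀ i : Fin m, v i ∈ Δ → key i = (i : ℕ) := by
    intro i h; simp [hkeydef, h]
  have hkeyB : ∀ i : Fin m, ¬ v i ∈ Δ → key i = m + (i : ℕ) := by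
    intro i h; simp [hkeydef, h]
  have hK : StrictMono (fun a => key (σ a)) := by
    intro a b hab
    simp only
    by_cases ha : (a : ℕ) < t
    · by_cases hb : (b : ℕ) < t
      · have hlt : σ a < σ b := by
          rw [hσA a ha, hσA b hb]
          exact (A.orderEmbOfFin rfl).strictMono (by exact hab)
        rw [hkeyA _ ((hPiff a).mpr ha), hkeyA _ ((hPiff b).mpr hb)]
        exact hlt
      · rw [hkeyA _ ((hPiff a).mpr ha), hkeyB _ (fun h => hb ((hPiff b).mp h))]
        have := (σ a).isLt; omega
    · have hb : ¬ (b : ℕ) < t := by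
        intro hb; exact ha (lt_trans (by exact_mod_cast hab) hb)
      have hlt : σ a < σ b := by
        rw [hσB a ha, hσB b hb]
        refine (B.orderEmbOfFin hBcard).strictMono ?_
        rw [Fin.mk_lt_mk]
        have : (a : ℕ) < (b : ℕ) := hab
        omega
      rw [hkeyB _ (fun h => ha ((hPiff a).mp h)), hkeyB _ (fun h => hb ((hPiff b).mp h))]
      omega
  have hσinj : Function.Injective σ := by
    intro a b hab
    exact hK.injective (by simp [hab])
  have hσbij : Function.Bijective σ := (Finite.injective_iff_bijective).mp hσinj
  set w : Fin m → V := fun a => v (σ a) with hwdef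
  have hwinj : Function.Injective w := hvinj.comp hσinj
  -- the crucial equivalence: for neighbours, the key order is the original order
  have hkeyadj : ∀ k i' : Fin m, G.Adj (v k) (v i') → (key i' < key k ↔ i' < k) := by
    intro k i' hadj
    have hne : i' ≠ k := by
      rintro rfl; exact G.irrefl hadj
    have hmemS : ∀ p q : Fin m, p < q → G.Adj (v q) (v p) → v p ∈ numSset G v q := by
      intro p q hpq h
      rw [numSset_eq G hvinj]
      exact Finset.mem_inter.mpr ⟨SimpleGraph.mem_neighborFinset _ _ _ |>.mpr h,
        Finset.mem_image.mpr ⟨p, Finset.mem_Iio.mpr hpq, rfl⟩⟩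
    by_cases hi : v i' ∈ Δ <;> by_cases hk : v k ∈ Δ
    · rw [hkeyA _ hi, hkeyA _ hk, Fin.lt_def]
    · -- i' discrete, k continuous: both sides hold
      have h1 : i' < k := by
        rcases lt_trichotomy i' k with h | h | h
        · exact h
        · exact absurd h hne
        · exfalso
          have hpos : 0 < (i' : ℕ) := lt_of_le_of_lt (Nat.zero_le _) h
          rcases hv.mixed i' hpos with h' | h'
          · exact h' hi
          · exact hk (h' (hmemS k i' h hadj.symm))
      rw [hkeyA _ hi, hkeyB _ hk, Fin.lt_def]
      have := i'.isLt
      constructor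
      · intro _; exact_mod_cast h1
      · intro _; omega
    · -- i' continuous, k discrete: both sides fail
      have h1 : ¬ i' < k := by
        intro h
        have hpos : 0 < (k : ℕ) := lt_of_le_of_lt (Nat.zero_le _) h
        rcases hv.mixed k hpos with h' | h'
        · exact h' hk
        · exact hi (h' (hmemS i' k h hadj))
      rw [hkeyB _ hi, hkeyA _ hk, Fin.lt_def]
      rw [Fin.lt_def] at h1
      have := k.isLt
      constructor
      · intro h; omega
      · intro h; omega
    · rw [hkeyB _ hi, hkeyB _ hk, Fin.lt_def]
      omega
  -- the separators are unchanged by the reorder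
  have hS : ∀ j : Fin m, numSset G w j = numSset G v (σ j) := by
    intro j
    rw [numSset_eq G hwinj, numSset_eq G hvinj]
    ext z
    simp only [Finset.mem_inter, SimpleGraph.mem_neighborFinset, Finset.mem_image,
      Finset.mem_Iio, hwdef]
    constructor
    · rintro ⟨hadj, i, hij, rfl⟩
      exact ⟨hadj, σ i, (hkeyadj (σ j) (σ i) hadj).mp (hK hij), rfl⟩
    · rintro ⟨hadj, i', hij, rfl⟩
      obtain ⟨i, rfl⟩ := hσbij.surjective i'
      exact ⟨hadj, i, hK.lt_iff_lt.mp ((hkeyadj (σ j) (σ i) hadj).mpr hij), rfl⟩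
  -- separators at positions mapping to the first vertex are empty
  have hS0 : ∀ j : Fin m, ¬ 0 < ((σ j : Fin m) : ℕ) → numSset G v (σ j) = ∅ := by
    intro j h0
    rw [numSset_eq G hvinj]
    ext z
    simp only [Finset.mem_inter, Finset.mem_image, Finset.mem_Iio, Finset.notMem_empty,
      iff_false, not_and]
    rintro - ⟨i, hi, rfl⟩
    rw [Fin.lt_def] at hi
    omega
  have hwbij : Function.Bijective w := hv.bijective.comp hσbij
  have hsep : ∀ j : Fin m, 0 < (j : ℕ) → ∀ x y : V,
      x ∈ numSset G w j → y ∈ numSset G w j → x ≠ y → G.Adj x y := by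
    intro j hj x y hx hy hxy
    rw [hS j] at hx hy
    by_cases h0 : 0 < ((σ j : Fin m) : ℕ)
    · exact hv.sep_complete (σ j) h0 x y hx hy hxy
    · rw [hS0 j h0] at hx
      exact absurd hx (Finset.notMem_empty x)
  refine ⟨w, ⟨hwbij, ?_, hsep, ?_⟩, t, htm, fun j => hPiff j⟩
  · intro j hj
    exact exists_prev_aux G hwinj j hj (hsep j hj)
  · intro j hj
    rw [hS j]
    by_cases h0 : 0 < ((σ j : Fin m) : ℕ)
    · exact hv.mixed (σ j) h0
    · right
      rw [hS0 j h0]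
      simp
end

section
/- Let v_1, …, v_m be a perfect numbering of a mixed graph G and let 1 ≤ k < m be such that v_k ∈ Γ (continuous) and v_{k+1} ∈ Δ (discrete). Then v_k and v_{k+1} are non-adjacent in G, the enumeration obtained from v_1, …, v_m by transposing v_k and v_{k+1} leaves the set B(v) unchanged for every vertex v, and this transposed enumeration is again a perfect numbering of G. -/
open Finset

lemma numSset_eq_erase {V : Type*} [Fintype V] [DecidableEq V] (G : SimpleGraph V)
    [DecidableRel G.Adj] {m : ℕ} {u : Fin m → V} (hu : Function.Injective u)
    (j : Fin m) : numSset G u j = (numBset G u j).erase (u j) := by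
  ext x
  simp only [numSset, numBset, Finset.mem_erase, Finset.mem_inter, Finset.mem_image,
    Finset.mem_Iic, Finset.mem_Iio]
  constructor
  · rintro ⟨⟨hA, _⟩, i, hij, rfl⟩
    exact ⟨fun h => absurd (hu h) (ne_of_lt hij), hA, i, le_of_lt hij, rfl⟩
  · rintro ⟨hne, hA, i, hij, rfl⟩
    exact ⟨⟨hA, i, hij, rfl⟩, i, lt_of_le_of_ne hij (fun h => hne (by rw [h])), rfl⟩

lemma numSset_eq_empty {V : Type*} [Fintype V] [DecidableEq V] (G : SimpleGraph V)
    [DecidableRel G.Adj] {m : ℕ} (u : Fin m → V) (j : Fin m) (hj : (j : ℕ) = 0) :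
    numSset G u j = ∅ := by
  ext x
  simp only [numSset, Finset.mem_inter, Finset.mem_image, Finset.mem_Iio,
    Finset.notMem_empty, iff_false]
  rintro ⟨-, i, hij, rfl⟩
  rw [Fin.lt_def, hj] at hij
  omega

/-- If, in a perfect numbering of a mixed graph, a continuous vertex `v_k` is
immediately followed by a discrete vertex `v_{k+1}`, then the two vertices are
non-adjacent, transposing them leaves all the sets `B(·)` unchanged, and the
transposed enumeration is again a perfect numbering. -/
theorem isPerfectNumbering_swap
    {V : Type*} [Fintype V] [DecidableEq V] (G : SimpleGraph V)
    [DecidableRel G.Adj] (Δ : Set V) {m : ℕ} (v : Fin m → V)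
    (hv : IsPerfectNumbering G Δ v)
    (k : Fin m) (hk : (k : ℕ) + 1 < m)
    (hcont : v k ∉ Δ) (hdisc : v ⟨(k : ℕ) + 1, hk⟩ ∈ Δ) :
    ¬ G.Adj (v k) (v ⟨(k : ℕ) + 1, hk⟩) ∧
    (∀ i : Fin m,
      numBset G (v ∘ Equiv.swap k ⟨(k : ℕ) + 1, hk⟩)
        (Equiv.swap k ⟨(k : ℕ) + 1, hk⟩ i) = numBset G v i) ∧
    IsPerfectNumbering G Δ (v ∘ Equiv.swap k ⟨(k : ℕ) + 1, hk⟩) := by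
  set k' : Fin m := ⟨(k : ℕ) + 1, hk⟩ with hk'def
  have hinj := hv.bijective.injective
  have hkk' : k < k' := by simp [hk'def, Fin.lt_def]
  have hkval : (k' : ℕ) = (k : ℕ) + 1 := rfl
  have hne : k ≠ k' := ne_of_lt hkk'
  set σ : Equiv.Perm (Fin m) := Equiv.swap k k' with hσdef
  have σk : σ k = k' := Equiv.swap_apply_left k k'
  have σk' : σ k' = k := Equiv.swap_apply_right k k'
  have σfix : ∀ i : Fin m, i ≠ k → i ≠ k' → σ i = i :=
    fun i h1 h2 => Equiv.swap_apply_of_ne_of_ne h1 h2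
  have σσ : ∀ i : Fin m, σ (σ i) = i := fun i => Equiv.swap_apply_self k k' i
  -- Step 1: non-adjacency
  have hnadj : ¬ G.Adj (v k) (v k') := by
    intro hadj
    have hmem : v k ∈ numSset G v k' := by
      refine Finset.mem_inter.mpr ⟨Finset.mem_inter.mpr ⟨?_, ?_⟩, ?_⟩
      · exact Finset.mem_insert_of_mem (by simpa using hadj.symm)
      · exact Finset.mem_image.mpr ⟨k, Finset.mem_Iic.mpr (le_of_lt hkk'), rfl⟩
      · exact Finset.mem_image.mpr ⟨k, Finset.mem_Iio.mpr hkk', rfl⟩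
    rcases hv.mixed k' (Nat.succ_pos _) with h | h
    · exact h hdisc
    · exact hcont (h hmem)
  have hvk'notA : v k' ∉ insert (v k) (G.neighborFinset (v k)) := by
    simp only [Finset.mem_insert, SimpleGraph.mem_neighborFinset]
    rintro (h | h)
    · exact hne (hinj h.symm)
    · exact hnadj h
  have hvknotA' : v k ∉ insert (v k') (G.neighborFinset (v k')) := by
    simp only [Finset.mem_insert, SimpleGraph.mem_neighborFinset]
    rintro (h | h)
    · exact hne (hinj h)
    · exact hnadj h.symm
  -- image facts
  have hIio : (Iio k).image σ = Iio k := by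
    rw [Finset.image_congr (g := id) ?_, Finset.image_id]
    intro x hx
    simp only [Finset.mem_coe, Finset.mem_Iio] at hx
    exact σfix x (ne_of_lt hx) (ne_of_lt (lt_trans hx hkk'))
  have hIiok' : Iio k' = insert k (Iio k) := by
    ext x
    simp only [Finset.mem_Iio, Finset.mem_insert, Fin.lt_def, hkval]
    constructor
    · intro h
      rcases Nat.lt_succ_iff_lt_or_eq.mp h with h | h
      · exact Or.inr h
      · exact Or.inl (Fin.ext h)
    · rintro (rfl | h)
      · omega
      · omega
  have hIick : (Iic k).image σ = insert k' (Iio k) := by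
    rw [← Finset.Iio_insert, Finset.image_insert, σk, hIio]
  have hIick' : (Iic k').image σ = Iic k' := by
    rw [← Finset.Iio_insert, hIiok', Finset.image_insert, Finset.image_insert, σk', σk, hIio,
      Finset.insert_comm]
  have hIicother : ∀ j : Fin m, j ≠ k → j ≠ k' → (Iic j).image σ = Iic j := by
    intro j hjk hjk'
    have hmaps : ∀ y : Fin m, y ≤ j → σ y ≤ j := by
      intro y hy
      rcases eq_or_ne y k with h1 | h1
      · rw [h1, σk, Fin.le_def, hkval]
        have h2 : (k : ℕ) ≤ (j : ℕ) := Fin.le_def.mp (h1 ▸ hy)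
        have h3 : (j : ℕ) ≠ (k : ℕ) := fun h => hjk (Fin.ext h)
        have h4 : (j : ℕ) ≠ (k : ℕ) + 1 := fun h => hjk' (Fin.ext (h.trans hkval.symm))
        omega
      · rcases eq_or_ne y k' with h2 | h2
        · rw [h2, σk']
          exact le_trans (le_of_lt hkk') (h2 ▸ hy)
        · rw [σfix y h1 h2]; exact hy
    ext x
    simp only [Finset.mem_image, Finset.mem_Iic]
    constructor
    · rintro ⟨y, hy, rfl⟩; exact hmaps y hy
    · intro hx
      exact ⟨σ x, hmaps x hx, σσ x⟩
  -- B sets are unchanged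
  have himg : ∀ j : Fin m, (Iic j).image (v ∘ σ) = ((Iic j).image σ).image v :=
    fun j => (Finset.image_image).symm
  have hB : ∀ i : Fin m, numBset G (v ∘ σ) (σ i) = numBset G v i := by
    intro i
    have hcomp : (v ∘ σ) (σ i) = v i := by rw [Function.comp_apply, σσ]
    rcases eq_or_ne i k with h1 | h1
    · rw [numBset, numBset, hcomp, h1, σk, himg k', hIick', ← Finset.Iio_insert, hIiok',
        Finset.image_insert, Finset.inter_insert_of_notMem hvk'notA,
        Finset.Iio_insert]
    · rcases eq_or_ne i k' with h2 | h2
      · rw [numBset, numBset, hcomp, h2, σk', himg k, hIick, ← Finset.Iio_insert, hIiok',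
          Finset.image_insert, Finset.image_insert, Finset.image_insert,
          Finset.insert_comm (v k'), Finset.inter_insert_of_notMem hvknotA']
      · rw [numBset, numBset, hcomp, σfix i h1 h2, himg i, hIicother i h1 h2]
  -- S sets are unchanged
  have winj : Function.Injective (v ∘ σ) := hinj.comp σ.injective
  have hS : ∀ i : Fin m, numSset G (v ∘ σ) (σ i) = numSset G v i := by
    intro i
    rw [numSset_eq_erase G winj, numSset_eq_erase G hinj, hB i]
    congr 1
    rw [Function.comp_apply, σσ]
  have hB' : ∀ j : Fin m, numBset G (v ∘ σ) j = numBset G v (σ j) := by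
    intro j
    rw [← hB (σ j), σσ]
  have hS' : ∀ j : Fin m, numSset G (v ∘ σ) j = numSset G v (σ j) := by
    intro j
    rw [← hS (σ j), σσ]
  refine ⟨hnadj, hB, ?_⟩
  -- subset fact: S_{k'} ⊆ S_k (needed if the previous block of k' is B_k)
  have hSsub : numSset G v k' ⊆ numBset G v k → numSset G v k' ⊆ numSset G v k := by
    intro hsub x hx
    rw [numSset_eq_erase G hinj]
    refine Finset.mem_erase.mpr ⟨fun hxeq => ?_, hsub hx⟩
    have hxA : x ∈ insert (v k') (G.neighborFinset (v k')) :=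
      (Finset.mem_inter.mp (Finset.mem_inter.mp hx).1).1
    rw [hxeq] at hxA
    exact hvknotA' hxA
  constructor
  · exact hv.bijective.comp σ.bijective
  · -- exists_prev
    intro j hj
    rcases eq_or_ne j k with h1 | h1
    · rw [h1]
      have hjpos : 0 < (k : ℕ) := h1 ▸ hj
      rcases hv.exists_prev k' (Nat.succ_pos _) with ⟨i, hik', hsub⟩
      rcases eq_or_ne i k with h2 | h2
      · rw [h2] at hsub
        have hsub2 : numSset G v k' ⊆ numSset G v k := hSsub hsub
        rcases hv.exists_prev k hjpos with ⟨i₀, hi₀, hsub₀⟩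
        refine ⟨i₀, hi₀, ?_⟩
        rw [hS', σk, hB', σfix i₀ (ne_of_lt hi₀) (ne_of_lt (lt_trans hi₀ hkk'))]
        exact fun x hx => hsub₀ (hsub2 hx)
      · have hik : i < k := by
          rw [Fin.lt_def] at hik' ⊢
          rw [hkval] at hik'
          have : (i : ℕ) ≠ (k : ℕ) := fun h => h2 (Fin.ext h)
          omega
        refine ⟨i, hik, ?_⟩
        rw [hS', σk, hB', σfix i h2 (ne_of_lt (lt_trans hik hkk'))]
        exact hsub
    · rcases eq_or_ne j k' with h2 | h2
      · rw [h2]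
        by_cases hk0 : (k : ℕ) = 0
        · refine ⟨k, hkk', ?_⟩
          rw [hS', σk', numSset_eq_empty G v k hk0]
          exact Finset.empty_subset _
        · rcases hv.exists_prev k (by omega) with ⟨i, hik, hsub⟩
          refine ⟨i, lt_trans hik hkk', ?_⟩
          rw [hS', σk', hB', σfix i (ne_of_lt hik) (ne_of_lt (lt_trans hik hkk'))]
          exact hsub
      · rcases hv.exists_prev j hj with ⟨i, hij, hsub⟩
        have hσij : σ i < j := by
          rcases eq_or_ne i k with hi1 | hi1
          · rw [hi1, σk, Fin.lt_def, hkval]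
            have h5 : (k : ℕ) < (j : ℕ) := Fin.lt_def.mp (hi1 ▸ hij)
            have h6 : (j : ℕ) ≠ (k : ℕ) + 1 := fun h => h2 (Fin.ext (h.trans hkval.symm))
            omega
          · rcases eq_or_ne i k' with hi2 | hi2
            · rw [hi2, σk']
              exact lt_trans hkk' (hi2 ▸ hij)
            · rw [σfix i hi1 hi2]; exact hij
        refine ⟨σ i, hσij, ?_⟩
        rw [hS', σfix j h1 h2, hB', σσ]
        exact hsub
  · -- sep_complete
    intro j hj u w hu hw huw
    rw [hS'] at hu hw
    by_cases h0 : 0 < (σ j : ℕ)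
    · exact hv.sep_complete (σ j) h0 u w hu hw huw
    · exfalso
      have he : numSset G v (σ j) = ∅ := numSset_eq_empty G v (σ j) (by omega)
      rw [he] at hu
      exact Finset.notMem_empty u hu
  · -- mixed
    intro j hj
    by_cases h0 : 0 < (σ j : ℕ)
    · have := hv.mixed (σ j) h0
      rw [hS']
      simpa using this
    · right
      rw [hS', numSset_eq_empty G v (σ j) (by omega)]
      simp
end

section
/- Assume the p×p matrix S_{a,a} is invertible. Then the infimum over all α : I → ℝ and β ∈ ℝ^p of SSE(α, β) equals S_{j,j} − S_{j,a} S_{a,a}⁻¹ S_{a,j}, and this infimum is attained exactly at β̂ = S_{a,a}⁻¹ S_{a,j} and α̂(i) = ȳ_j(i) − β̂ᵀ ȳ_a(i) for all i ∈ I. -/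
open Matrix

noncomputable section

/-- The cell mean `ȳ_j(i)` of the responses in cell `i`. -/
def cellMeanR {I : Type*} (η : I → Type*) [∀ i, Fintype (η i)]
    (yj : ∀ i, η i → ℝ) (i : I) : ℝ :=
  (∑ k, yj i k) / (Fintype.card (η i) : ℝ)

/-- The cell mean `ȳ_a(i)` of the covariate vectors in cell `i`. -/
def cellMeanV {I : Type*} {p : ℕ} (η : I → Type*) [∀ i, Fintype (η i)]
    (ya : ∀ i, η i → Fin p → ℝ) (i : I) : Fin p → ℝ :=
  ((Fintype.card (η i) : ℝ))⁻¹ • ∑ k, ya i k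

/-- The centred response `γ_j^k(i) = y_j^k(i) − ȳ_j(i)`. -/
def ctrR {I : Type*} (η : I → Type*) [∀ i, Fintype (η i)]
    (yj : ∀ i, η i → ℝ) (i : I) (k : η i) : ℝ :=
  yj i k - cellMeanR η yj i

/-- The centred covariate vector `γ_a^k(i) = y_a^k(i) − ȳ_a(i)`. -/
def ctrV {I : Type*} {p : ℕ} (η : I → Type*) [∀ i, Fintype (η i)]
    (ya : ∀ i, η i → Fin p → ℝ) (i : I) (k : η i) : Fin p → ℝ :=
  ya i k - cellMeanV η ya i

/-- The sum of squared errors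
`SSE(α, β) = Σ_i Σ_{k∈η(i)} (y_j^k(i) − α(i) − βᵀ y_a^k(i))²`. -/
def SSE {I : Type*} {p : ℕ} [Fintype I] (η : I → Type*) [∀ i, Fintype (η i)]
    (yj : ∀ i, η i → ℝ) (ya : ∀ i, η i → Fin p → ℝ)
    (α : I → ℝ) (β : Fin p → ℝ) : ℝ :=
  ∑ i, ∑ k, (yj i k - α i - β ⬝ᵥ ya i k) ^ 2

end

noncomputable section
open Matrix

/-- The centred Gram matrix `S_{a,a} = Σ_i Σ_k γ_a^k(i) γ_a^k(i)ᵀ`. -/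
def Saa {I : Type*} {p : ℕ} [Fintype I] (η : I → Type*) [∀ i, Fintype (η i)]
    (ya : ∀ i, η i → Fin p → ℝ) : Matrix (Fin p) (Fin p) ℝ :=
  ∑ i, ∑ k, vecMulVec (ctrV η ya i k) (ctrV η ya i k)

/-- The centred cross-moment vector `S_{a,j} = Σ_i Σ_k γ_j^k(i) γ_a^k(i)`. -/
def Saj {I : Type*} {p : ℕ} [Fintype I] (η : I → Type*) [∀ i, Fintype (η i)]
    (yj : ∀ i, η i → ℝ) (ya : ∀ i, η i → Fin p → ℝ) : Fin p → ℝ :=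
  ∑ i, ∑ k, ctrR η yj i k • ctrV η ya i k

/-- The centred sum of squares `S_{j,j} = Σ_i Σ_k γ_j^k(i)²`. -/
def Sjj {I : Type*} [Fintype I] (η : I → Type*) [∀ i, Fintype (η i)]
    (yj : ∀ i, η i → ℝ) : ℝ :=
  ∑ i, ∑ k, (ctrR η yj i k) ^ 2

section Aux

lemma dotProduct_finset_sum {ι n : Type*} [Fintype n] (s : Finset ι)
    (x : n → ℝ) (f : ι → n → ℝ) :
    x ⬝ᵥ (∑ a ∈ s, f a) = ∑ a ∈ s, x ⬝ᵥ f a := by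
  simp only [dotProduct, Finset.sum_apply, Finset.mul_sum]
  exact Finset.sum_comm

lemma finset_sum_mulVec {ι m n : Type*} [Fintype n] (s : Finset ι)
    (f : ι → Matrix m n ℝ) (y : n → ℝ) :
    (∑ a ∈ s, f a) *ᵥ y = ∑ a ∈ s, f a *ᵥ y := by
  ext j
  simp only [Matrix.mulVec, dotProduct, Matrix.sum_apply, Finset.sum_apply,
    Finset.sum_mul]
  exact Finset.sum_comm

lemma vecMulVec_mulVec' {n : Type*} [Fintype n] (u v y : n → ℝ) :
    Matrix.vecMulVec u v *ᵥ y = (v ⬝ᵥ y) • u := by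
  ext j
  simp only [Matrix.mulVec, dotProduct, Matrix.vecMulVec_apply, Pi.smul_apply,
    smul_eq_mul, Finset.mul_sum]
  rw [Finset.sum_mul]
  exact Finset.sum_congr rfl fun m _ => by ring

variable {I : Type*} {p : ℕ} [Fintype I]
  (η : I → Type*) [∀ i, Fintype (η i)] [∀ i, Nonempty (η i)]

lemma sum_ctrR_eq_zero (yj : ∀ i, η i → ℝ) (i : I) :
    ∑ k, ctrR η yj i k = 0 := by
  have hc : (Fintype.card (η i) : ℝ) ≠ 0 := Nat.cast_ne_zero.mpr Fintype.card_ne_zero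
  simp only [ctrR, Finset.sum_sub_distrib, Finset.sum_const, Finset.card_univ,
    nsmul_eq_mul, cellMeanR]
  field_simp
  ring

lemma sum_ctrV_eq_zero (ya : ∀ i, η i → Fin p → ℝ) (i : I) (j : Fin p) :
    ∑ k, ctrV η ya i k j = 0 := by
  have hc : (Fintype.card (η i) : ℝ) ≠ 0 := Nat.cast_ne_zero.mpr Fintype.card_ne_zero
  simp only [ctrV, Pi.sub_apply, Finset.sum_sub_distrib, Finset.sum_const,
    Finset.card_univ, nsmul_eq_mul, cellMeanV, Pi.smul_apply, smul_eq_mul,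
    Finset.sum_apply]
  field_simp
  ring

lemma sum_dot_ctrV (ya : ∀ i, η i → Fin p → ℝ) (β : Fin p → ℝ) (i : I) :
    ∑ k, β ⬝ᵥ ctrV η ya i k = 0 := by
  simp only [dotProduct]
  rw [Finset.sum_comm]
  simp [← Finset.mul_sum, sum_ctrV_eq_zero η ya i]

lemma SSE_decomp (yj : ∀ i, η i → ℝ) (ya : ∀ i, η i → Fin p → ℝ)
    (α : I → ℝ) (β : Fin p → ℝ) :
    SSE η yj ya α β =
      (∑ i, ∑ k, (ctrR η yj i k - β ⬝ᵥ ctrV η ya i k) ^ 2)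
      + ∑ i, (Fintype.card (η i) : ℝ) *
          (cellMeanR η yj i - α i - β ⬝ᵥ cellMeanV η ya i) ^ 2 := by
  unfold SSE
  rw [← Finset.sum_add_distrib]
  refine Finset.sum_congr rfl fun i _ => ?_
  set c := cellMeanR η yj i - α i - β ⬝ᵥ cellMeanV η ya i with hc
  have hterm : ∀ k, yj i k - α i - β ⬝ᵥ ya i k
      = (ctrR η yj i k - β ⬝ᵥ ctrV η ya i k) + c := by
    intro k
    have hy : ya i k = ctrV η ya i k + cellMeanV η ya i := by simp [ctrV]
    rw [hy, dotProduct_add, hc]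
    simp only [ctrR]
    ring
  simp_rw [hterm, add_sq]
  rw [Finset.sum_add_distrib, Finset.sum_add_distrib]
  have h1 : ∑ k, 2 * (ctrR η yj i k - β ⬝ᵥ ctrV η ya i k) * c = 0 := by
    simp_rw [mul_assoc, ← Finset.mul_sum, ← Finset.sum_mul, Finset.sum_sub_distrib,
      sum_ctrR_eq_zero η yj i, sum_dot_ctrV η ya β i]
    ring
  rw [h1]
  simp [Finset.sum_const, Finset.card_univ, nsmul_eq_mul]

lemma Saa_mulVec (ya : ∀ i, η i → Fin p → ℝ) (y : Fin p → ℝ) :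
    Saa η ya *ᵥ y = ∑ i, ∑ k, (ctrV η ya i k ⬝ᵥ y) • ctrV η ya i k := by
  rw [Saa, finset_sum_mulVec]
  refine Finset.sum_congr rfl fun i _ => ?_
  rw [finset_sum_mulVec]
  exact Finset.sum_congr rfl fun k _ => vecMulVec_mulVec' _ _ _

lemma dot_Saa (ya : ∀ i, η i → Fin p → ℝ) (x y : Fin p → ℝ) :
    x ⬝ᵥ (Saa η ya *ᵥ y) =
      ∑ i, ∑ k, (x ⬝ᵥ ctrV η ya i k) * (y ⬝ᵥ ctrV η ya i k) := by
  rw [Saa_mulVec, dotProduct_finset_sum]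
  refine Finset.sum_congr rfl fun i _ => ?_
  rw [dotProduct_finset_sum]
  refine Finset.sum_congr rfl fun k _ => ?_
  rw [dotProduct_smul, smul_eq_mul, dotProduct_comm (ctrV η ya i k) y]
  ring

lemma dot_Saj (yj : ∀ i, η i → ℝ) (ya : ∀ i, η i → Fin p → ℝ) (x : Fin p → ℝ) :
    x ⬝ᵥ Saj η yj ya = ∑ i, ∑ k, ctrR η yj i k * (x ⬝ᵥ ctrV η ya i k) := by
  rw [Saj, dotProduct_finset_sum]
  refine Finset.sum_congr rfl fun i _ => ?_
  rw [dotProduct_finset_sum]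
  refine Finset.sum_congr rfl fun k _ => ?_
  rw [dotProduct_smul, smul_eq_mul]

end Aux

/-- If `S_{a,a}` is invertible, the least value of `SSE(α, β)` over all
intercept functions `α` and slope vectors `β` is
`S_{j,j} − S_{j,a} S_{a,a}⁻¹ S_{a,j}`, attained exactly at
`β̂ = S_{a,a}⁻¹ S_{a,j}` and `α̂(i) = ȳ_j(i) − β̂ᵀ ȳ_a(i)`. -/
theorem isLeast_SSE {I : Type*} {p : ℕ} [Fintype I] [Nonempty I]
    (η : I → Type*) [∀ i, Fintype (η i)] [∀ i, Nonempty (η i)]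
    (yj : ∀ i, η i → ℝ) (ya : ∀ i, η i → Fin p → ℝ)
    (hS : IsUnit (Saa η ya)) :
    IsLeast (Set.range fun ab : (I → ℝ) × (Fin p → ℝ) => SSE η yj ya ab.1 ab.2)
      (Sjj η yj - Saj η yj ya ⬝ᵥ ((Saa η ya)⁻¹ *ᵥ Saj η yj ya)) ∧
    ∀ (α : I → ℝ) (β : Fin p → ℝ),
      SSE η yj ya α β =
          Sjj η yj - Saj η yj ya ⬝ᵥ ((Saa η ya)⁻¹ *ᵥ Saj η yj ya) ↔
        β = (Saa η ya)⁻¹ *ᵥ Saj η yj ya ∧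
        ∀ i, α i = cellMeanR η yj i - β ⬝ᵥ cellMeanV η ya i := by
  classical
  have hdet : IsUnit (Saa η ya).det := (Matrix.isUnit_iff_isUnit_det _).mp hS
  set b : Fin p → ℝ := (Saa η ya)⁻¹ *ᵥ Saj η yj ya with hb
  have hSb : Saa η ya *ᵥ b = Saj η yj ya := by
    rw [hb, Matrix.mulVec_mulVec, Matrix.mul_nonsing_inv _ hdet, Matrix.one_mulVec]
  set T : ℝ := Sjj η yj - Saj η yj ya ⬝ᵥ b with hT
  -- the key identity
  have key : ∀ (α : I → ℝ) (β : Fin p → ℝ), SSE η yj ya α β =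
      T + (∑ i, ∑ k, ((β - b) ⬝ᵥ ctrV η ya i k) ^ 2)
        + ∑ i, (Fintype.card (η i) : ℝ) *
            (cellMeanR η yj i - α i - β ⬝ᵥ cellMeanV η ya i) ^ 2 := by
    intro α β
    rw [SSE_decomp η yj ya α β]
    congr 1
    have hQD : (∑ i, ∑ k, (ctrR η yj i k - β ⬝ᵥ ctrV η ya i k) ^ 2)
        = T + ∑ i, ∑ k, ((β - b) ⬝ᵥ ctrV η ya i k) ^ 2 := by
      have hT' : T = (Sjj η yj) - 2 * (β ⬝ᵥ Saj η yj ya)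
          + 2 * (β ⬝ᵥ (Saa η ya *ᵥ b)) - b ⬝ᵥ (Saa η ya *ᵥ b) := by
        rw [hSb, hT, dotProduct_comm (Saj η yj ya) b]
        ring
      rw [hT', Sjj, dot_Saj, dot_Saa, dot_Saa]
      simp_rw [Finset.mul_sum, ← Finset.sum_sub_distrib, ← Finset.sum_add_distrib,
        ← Finset.sum_sub_distrib, ← Finset.sum_add_distrib]
      refine Finset.sum_congr rfl fun i _ => Finset.sum_congr rfl fun k _ => ?_
      rw [sub_dotProduct]
      ring
    exact hQD
  have nonneg1 : ∀ β : Fin p → ℝ,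
      0 ≤ ∑ i, ∑ k, ((β - b) ⬝ᵥ ctrV η ya i k) ^ 2 := fun β =>
    Finset.sum_nonneg fun i _ => Finset.sum_nonneg fun k _ => sq_nonneg _
  have nonneg2 : ∀ (α : I → ℝ) (β : Fin p → ℝ),
      0 ≤ ∑ i, (Fintype.card (η i) : ℝ) *
          (cellMeanR η yj i - α i - β ⬝ᵥ cellMeanV η ya i) ^ 2 := fun α β =>
    Finset.sum_nonneg fun i _ => mul_nonneg (Nat.cast_nonneg _) (sq_nonneg _)
  -- value at the minimizer
  have hmin : SSE η yj ya (fun i => cellMeanR η yj i - b ⬝ᵥ cellMeanV η ya i) b = T := by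
    rw [key]
    have h1 : ∑ i, ∑ k, ((b - b) ⬝ᵥ ctrV η ya i k) ^ 2 = 0 := by
      simp
    have h2 : ∑ i, (Fintype.card (η i) : ℝ) *
        (cellMeanR η yj i - (cellMeanR η yj i - b ⬝ᵥ cellMeanV η ya i)
          - b ⬝ᵥ cellMeanV η ya i) ^ 2 = 0 := by
      refine Finset.sum_eq_zero fun i _ => ?_
      have : cellMeanR η yj i - (cellMeanR η yj i - b ⬝ᵥ cellMeanV η ya i)
          - b ⬝ᵥ cellMeanV η ya i = 0 := by ring
      rw [this]
      simp
    rw [h1, h2, add_zero, add_zero]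
  refine ⟨⟨⟨(fun i => cellMeanR η yj i - b ⬝ᵥ cellMeanV η ya i, b), hmin⟩, ?_⟩, ?_⟩
  · rintro x ⟨⟨α, β⟩, rfl⟩
    dsimp only
    rw [key α β]
    linarith [nonneg1 β, nonneg2 α β]
  · intro α β
    constructor
    · intro h
      rw [key α β] at h
      have h1 := nonneg1 β
      have h2 := nonneg2 α β
      have hD : ∑ i, ∑ k, ((β - b) ⬝ᵥ ctrV η ya i k) ^ 2 = 0 := by linarith
      have hE : ∑ i, (Fintype.card (η i) : ℝ) *
          (cellMeanR η yj i - α i - β ⬝ᵥ cellMeanV η ya i) ^ 2 = 0 := by linarith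
      have hDz : ∀ i, ∀ k, (β - b) ⬝ᵥ ctrV η ya i k = 0 := by
        intro i k
        have hi := (Finset.sum_eq_zero_iff_of_nonneg
          (fun i _ => Finset.sum_nonneg fun k _ => sq_nonneg _)).mp hD i (Finset.mem_univ i)
        have hk := (Finset.sum_eq_zero_iff_of_nonneg
          (fun k _ => sq_nonneg _)).mp hi k (Finset.mem_univ k)
        exact pow_eq_zero_iff (by norm_num) |>.mp hk
      have hbeta : β = b := by
        have hz : Saa η ya *ᵥ (β - b) = 0 := by
          rw [Saa_mulVec]
          refine Finset.sum_eq_zero fun i _ => Finset.sum_eq_zero fun k _ => ?_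
          rw [dotProduct_comm, hDz i k, zero_smul]
        have := congrArg (fun w => (Saa η ya)⁻¹ *ᵥ w) hz
        simp only [Matrix.mulVec_mulVec, Matrix.nonsing_inv_mul _ hdet,
          Matrix.one_mulVec, Matrix.mulVec_zero] at this
        exact sub_eq_zero.mp this
      refine ⟨hbeta, fun i => ?_⟩
      have hi := (Finset.sum_eq_zero_iff_of_nonneg
        (fun i _ => mul_nonneg (Nat.cast_nonneg _) (sq_nonneg _))).mp hE i (Finset.mem_univ i)
      have hc : (Fintype.card (η i) : ℝ) ≠ 0 := Nat.cast_ne_zero.mpr Fintype.card_ne_zero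
      have hsq : (cellMeanR η yj i - α i - β ⬝ᵥ cellMeanV η ya i) ^ 2 = 0 :=
        (mul_eq_zero.mp hi).resolve_left hc
      have := pow_eq_zero_iff (n := 2) (by norm_num) |>.mp hsq
      linarith [this]
    · rintro ⟨hbeta, halpha⟩
      rw [key α β, hbeta]
      have h1 : ∑ i, ∑ k, ((b - b) ⬝ᵥ ctrV η ya i k) ^ 2 = 0 := by simp
      have h2 : ∑ i, (Fintype.card (η i) : ℝ) *
          (cellMeanR η yj i - α i - b ⬝ᵥ cellMeanV η ya i) ^ 2 = 0 := by
        refine Finset.sum_eq_zero fun i _ => ?_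
        rw [halpha i, hbeta]
        have : cellMeanR η yj i - (cellMeanR η yj i - b ⬝ᵥ cellMeanV η ya i)
            - b ⬝ᵥ cellMeanV η ya i = 0 := by ring
        rw [this]
        simp
      rw [h1, h2, add_zero, add_zero]


end
end
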